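/- The longitudinal projection of the YM bracket is given by: for any modes (ξ₁,k₁), (ξ₂,k₂), B([ξ₁,ξ₂]_YM, k₁+k₂) = (ξ₁·k₂)(ξ₂·k₂) − (ξ₁·k₁)(ξ₂·k₁) + (k₁² − k₂²)(ξ₁·ξ₂); in particular, if both modes are transverse ((ξᵢ·kᵢ)=0) and on-shell (k₁² = k₂² = 0), then the YM bracket is transverse: B([ξ₁,ξ₂]_YM, k₁+k₂) = 0. -/

import Mathlib

namespace Stmt19

variable {V : Type*} [AddCommGroup V] [Module ℝ V]

/-- The YM bracket of modes (polarization part). -/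
def ymPol (B : LinearMap.BilinForm ℝ V) (p q : V × V) : V :=
  (2 * B p.1 q.2) • q.1 - (2 * B q.1 p.2) • p.1 + B p.1 q.1 • (p.2 - q.2)
    + B p.1 p.2 • q.1 - B q.1 q.2 • p.1

/-- The longitudinal projection of the YM bracket:
`B([ξ₁,ξ₂]_YM, k₁+k₂) = (ξ₁·k₂)(ξ₂·k₂) − (ξ₁·k₁)(ξ₂·k₁) + (k₁²−k₂²)(ξ₁·ξ₂)`;
in particular, if both modes are transverse and on-shell then the YM bracket
is transverse. -/
theorem ym_longitudinal_projection (B : LinearMap.BilinForm ℝ V) (hB : B.IsSymm)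
    (ξ₁ k₁ ξ₂ k₂ : V) :
    (B (ymPol B (ξ₁, k₁) (ξ₂, k₂)) (k₁ + k₂)
        = B ξ₁ k₂ * B ξ₂ k₂ - B ξ₁ k₁ * B ξ₂ k₁
          + (B k₁ k₁ - B k₂ k₂) * B ξ₁ ξ₂)
    ∧ (B ξ₁ k₁ = 0 → B ξ₂ k₂ = 0 → B k₁ k₁ = 0 → B k₂ k₂ = 0 →
        B (ymPol B (ξ₁, k₁) (ξ₂, k₂)) (k₁ + k₂) = 0) := by
  have main : B (ymPol B (ξ₁, k₁) (ξ₂, k₂)) (k₁ + k₂)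
      = B ξ₁ k₂ * B ξ₂ k₂ - B ξ₁ k₁ * B ξ₂ k₁
        + (B k₁ k₁ - B k₂ k₂) * B ξ₁ ξ₂ := by
    have h12 : B k₂ k₁ = B k₁ k₂ := hB.eq k₂ k₁
    have hx1 : B k₁ ξ₁ = B ξ₁ k₁ := hB.eq k₁ ξ₁
    have hx2 : B k₂ ξ₂ = B ξ₂ k₂ := hB.eq k₂ ξ₂
    have hx12 : B k₂ ξ₁ = B ξ₁ k₂ := hB.eq k₂ ξ₁
    have hx21 : B k₁ ξ₂ = B ξ₂ k₁ := hB.eq k₁ ξ₂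
    have hxx : B ξ₂ ξ₁ = B ξ₁ ξ₂ := hB.eq ξ₂ ξ₁
    simp only [ymPol, map_add, map_sub, map_smul, LinearMap.add_apply, LinearMap.sub_apply,
      LinearMap.smul_apply, smul_eq_mul, h12, hx1, hx2, hx12, hx21, hxx]
    ring
  refine ⟨main, fun h1 h2 h3 h4 => ?_⟩
  rw [main, h1, h2, h3, h4]; ring

end Stmt19
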